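/- arXiv:1312.6794 — 4 statements merged into one kernel-verified Lean document; each statement's English description precedes it below -/
import Mathlib

section
/- Let G be a group and f : G → G a group endomorphism with f ∘ f = f. Then the operation x ∘_f y = f(x y⁻¹) x satisfies the left self-distributivity law x ∘_f (y ∘_f z) = (x ∘_f y) ∘_f (x ∘_f z) for all x, y, z ∈ G. -/
theorem f_symmetric_conjugacy_LD {G : Type*} [Group G] (f : G →* G)
    (hf : ∀ x, f (f x) = f x) (x y z : G) :
    (fun a b => f (a * b⁻¹) * a) x ((fun a b => f (a * b⁻¹) * a) y z) =
      (fun a b => f (a * b⁻¹) * a) ((fun a b => f (a * b⁻¹) * a) x y)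
        ((fun a b => f (a * b⁻¹) * a) x z) := by
  simp only [map_mul, map_inv, hf]
  group
end

section
/- Let L be a set with families of operations O_A, O_B such that each pair in O_A × O_B is mutually left distributive. Let α be an iterated left multiplication map built from elements of L and operations in O_A, and let β be an iterated left multiplication map built from elements b₁,…,b_{k_B} ∈ L and operations *_{B₁},…,*_{B_{k_B}} ∈ O_B. Then for every a₀ ∈ L: α(b_{k_B}) *_{B_{k_B}} (α(b_{k_B−1}) *_{B_{k_B−1}} (⋯ (α(b₁) *_{B₁} α(a₀))⋯)) = α(β(a₀)). In particular, Alice's shared key K_A = α(β(a₀)) equals Bob's shared key K_B in the non-associative key establishment protocol. -/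
/-- Iterated left multiplication: given a list `[(x₁, *₁), …, (x_k, *_k)]`,
`iterLeftMul l y = x_k *_k (… (x₂ *₂ (x₁ *₁ y)) …)`. -/
def iterLeftMul {L : Type*} (l : List (L × (L → L → L))) (y : L) : L :=
  l.foldl (fun acc p => p.2 p.1 acc) y

lemma iterLeftMul_cons {L : Type*} (p : L × (L → L → L)) (l : List (L × (L → L → L))) (y : L) :
    iterLeftMul (p :: l) y = iterLeftMul l (p.2 p.1 y) := rfl

lemma iterLeftMul_endo {L : Type*}
    (OA OB : Set (L → L → L))
    (hab : ∀ sa ∈ OA, ∀ sb ∈ OB, ∀ x y z : L, sa x (sb y z) = sb (sa x y) (sa x z))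
    (la : List (L × (L → L → L))) (hla : ∀ p ∈ la, p.2 ∈ OA)
    (sb : L → L → L) (hsb : sb ∈ OB) (x y : L) :
    iterLeftMul la (sb x y) = sb (iterLeftMul la x) (iterLeftMul la y) := by
  induction la generalizing x y with
  | nil => rfl
  | cons p l ih =>
    rw [iterLeftMul_cons, iterLeftMul_cons, iterLeftMul_cons,
      hab p.2 (hla p List.mem_cons_self) sb hsb]
    exact ih (fun q hq => hla q (List.mem_cons_of_mem _ hq)) _ _

/-- Correctness of the non-associative key establishment protocol:
Bob's key `K_B = α(b_{k_B}) *_{B_{k_B}} (⋯ (α(b₁) *_{B₁} α(a₀)) ⋯)` equals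
Alice's key `K_A = α(β(a₀))`, where `α` is an iterated left multiplication
over `O_A` and `β` the one determined by the list `lb` over `O_B`. -/
theorem shared_key_agreement {L : Type*}
    (OA OB : Set (L → L → L))
    (hab : ∀ sa ∈ OA, ∀ sb ∈ OB, ∀ x y z : L, sa x (sb y z) = sb (sa x y) (sa x z))
    (hba : ∀ sa ∈ OA, ∀ sb ∈ OB, ∀ x y z : L, sb x (sa y z) = sa (sb x y) (sb x z))
    (la : List (L × (L → L → L))) (hla : ∀ p ∈ la, p.2 ∈ OA)
    (lb : List (L × (L → L → L))) (hlb : ∀ p ∈ lb, p.2 ∈ OB)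
    (a₀ : L) :
    iterLeftMul (lb.map (fun p => (iterLeftMul la p.1, p.2))) (iterLeftMul la a₀) =
      iterLeftMul la (iterLeftMul lb a₀) := by
  induction lb generalizing a₀ with
  | nil => rfl
  | cons p l ih =>
    rw [List.map_cons, iterLeftMul_cons, iterLeftMul_cons]
    rw [← iterLeftMul_endo OA OB hab la hla p.2 (hlb p List.mem_cons_self)]
    exact ih (fun q hq => hlb q (List.mem_cons_of_mem _ hq)) _
end

section
/- In the braid group B_∞ with shift endomorphism ∂ (σ_i ↦ σ_{i+1}), the shifted conjugacy operation x * y = ∂x⁻¹ · σ₁ · ∂y · x satisfies the left self-distributivity law: x * (y * z) = (x * y) * (x * z) for all x, y, z ∈ B_∞. -/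
/-- The braid relations on infinitely many strands. The generator with index
`i : ℕ` represents `σ_{i+1}`, so indices `i, j` with `j ≥ i + 2` are far apart
and indices `i, i + 1` are adjacent. -/
def braidRels : Set (FreeGroup ℕ) :=
  {r | (∃ i j : ℕ, i + 2 ≤ j ∧
          r = FreeGroup.of i * FreeGroup.of j * (FreeGroup.of i)⁻¹ * (FreeGroup.of j)⁻¹) ∨
       (∃ i : ℕ,
          r = FreeGroup.of i * FreeGroup.of (i + 1) * FreeGroup.of i *
            (FreeGroup.of (i + 1) * FreeGroup.of i * FreeGroup.of (i + 1))⁻¹)}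

/-- The braid group `B_∞` on infinitely many strands. -/
abbrev BInf : Type := PresentedGroup braidRels

/-- The generator `σ_i` of `B_∞` (for `i ≥ 1`). -/
def sigma (i : ℕ) : BInf := PresentedGroup.of (i - 1)

theorem shift_aux : ∀ r ∈ braidRels,
    FreeGroup.lift (fun i => (PresentedGroup.of (i + 1) : BInf)) r = 1 := by
  have key : ∀ s ∈ braidRels, (PresentedGroup.mk braidRels s : BInf) = 1 := fun s hs =>
    (QuotientGroup.eq_one_iff _).mpr (Subgroup.subset_normalClosure hs)
  rintro r (⟨i, j, hij, rfl⟩ | ⟨i, rfl⟩)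
  · have := key _ (Or.inl ⟨i + 1, j + 1, by omega, rfl⟩)
    simpa [PresentedGroup.of, map_mul, map_inv, PresentedGroup.mk] using this
  · have := key _ (Or.inr ⟨i + 1, rfl⟩)
    simpa [PresentedGroup.of, map_mul, map_inv, PresentedGroup.mk] using this

/-- The shift endomorphism `∂ : B_∞ → B_∞`, `σ_i ↦ σ_{i+1}`. -/
noncomputable def shift : BInf →* BInf :=
  PresentedGroup.toGroup (f := fun i => (PresentedGroup.of (i + 1) : BInf)) shift_aux

lemma rel_one : ∀ s ∈ braidRels, (PresentedGroup.mk braidRels s : BInf) = 1 := fun s hs =>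
  (QuotientGroup.eq_one_iff _).mpr (Subgroup.subset_normalClosure hs)

lemma comm_far (i : ℕ) : Commute (PresentedGroup.of 0 : BInf) (PresentedGroup.of (i + 2)) := by
  have := rel_one _ (Or.inl ⟨0, i + 2, by omega, rfl⟩)
  simp only [PresentedGroup.of, map_mul, map_inv, PresentedGroup.mk] at this
  exact commutatorElement_eq_one_iff_commute.mp this

lemma braid01 : (PresentedGroup.of 0 : BInf) * PresentedGroup.of 1 * PresentedGroup.of 0 =
    PresentedGroup.of 1 * PresentedGroup.of 0 * PresentedGroup.of 1 := by
  have := rel_one _ (Or.inr ⟨0, rfl⟩)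
  simp only [PresentedGroup.of, map_mul, map_inv, PresentedGroup.mk] at this
  exact mul_inv_eq_one.mp this

lemma shift_of (i : ℕ) : shift (PresentedGroup.of i) = PresentedGroup.of (i + 1) :=
  PresentedGroup.toGroup.of shift_aux

lemma comm_shift2 (x : BInf) : Commute (PresentedGroup.of 0 : BInf) (shift (shift x)) := by
  induction x using QuotientGroup.induction_on with
  | H w =>
    induction w using FreeGroup.induction_on with
    | C1 =>
      show Commute (PresentedGroup.of 0 : BInf) (shift (shift 1))
      simp [Commute.one_right, PresentedGroup.mk]
    | of i =>
      show Commute _ (shift (shift (PresentedGroup.of i)))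
      rw [shift_of, shift_of]
      exact comm_far i
    | inv_of i h =>
      show Commute (PresentedGroup.of 0 : BInf) (shift (shift (PresentedGroup.mk braidRels (FreeGroup.of i))⁻¹))
      rw [map_inv, map_inv]
      exact h.inv_right
    | mul a b ha hb =>
      have : (QuotientGroup.mk (a * b) : BInf) = QuotientGroup.mk a * QuotientGroup.mk b := rfl
      show Commute (PresentedGroup.of 0 : BInf) (shift (shift (PresentedGroup.mk braidRels a * PresentedGroup.mk braidRels b)))
      rw [map_mul, map_mul]
      exact ha.mul_right hb

lemma LD_abstract {G : Type*} [Group G] (sh : G →* G) (s : G)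
    (braid : s * sh s * s = sh s * s * sh s)
    (comm : ∀ a, Commute s (sh (sh a))) (x y z : G) :
    (sh x)⁻¹ * s * sh ((sh y)⁻¹ * s * sh z * y) * x =
      (sh ((sh x)⁻¹ * s * sh y * x))⁻¹ * s * sh ((sh x)⁻¹ * s * sh z * x) *
        ((sh x)⁻¹ * s * sh y * x) := by
  simp only [map_mul, map_inv, mul_assoc, mul_inv_rev, inv_inv, inv_mul_cancel_left,
    mul_inv_cancel_left]
  have hx := (comm x).inv_right.eq
  have hy := (comm y).inv_right.eq
  have hz := (comm z).eq
  rw [← mul_assoc s (sh (sh y))⁻¹, hy, mul_assoc]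
  congr 2
  rw [← mul_assoc s (sh (sh x))⁻¹, hx, mul_assoc, mul_inv_cancel_left,
    ← mul_assoc (sh (sh z)) s, ← hz, mul_assoc, eq_inv_mul_iff_mul_eq]
  simp only [← mul_assoc]
  rw [braid]

/-- Shifted conjugacy `x * y = ∂x⁻¹ · σ₁ · ∂y · x` is left self-distributive. -/
theorem shifted_conjugacy_LD (x y z : BInf) :
    (fun a b => (shift a)⁻¹ * sigma 1 * shift b * a) x
        ((fun a b => (shift a)⁻¹ * sigma 1 * shift b * a) y z) =
      (fun a b => (shift a)⁻¹ * sigma 1 * shift b * a)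
        ((fun a b => (shift a)⁻¹ * sigma 1 * shift b * a) x y)
        ((fun a b => (shift a)⁻¹ * sigma 1 * shift b * a) x z) := by
  have braid : sigma 1 * shift (sigma 1) * sigma 1 =
      shift (sigma 1) * sigma 1 * shift (sigma 1) := by
    rw [show sigma 1 = PresentedGroup.of 0 from rfl, shift_of]
    exact braid01
  exact LD_abstract shift (sigma 1) braid (fun a => comm_shift2 a) x y z
end

section
/- Let p ≥ 1 and let a₁, a₂ ∈ B_∞ be of the form a₁ = a₁' τ_{p,p}^{±1} a₁'' and a₂ = a₂' τ_{p,p}^{±1} a₂'' with a₁', a₁'', a₂', a₂'' ∈ B_p. Define x *_i y = ∂^p(x⁻¹) a_i ∂^p(y) x for i = 1, 2. If [a₁', a₂''] = [a₂', a₁''] = [a₁', a₂'] = 1, then (B_∞, *₁, *₂) is a mutually left distributive system. -/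
/-- The subgroup `B_p ≤ B_∞` generated by `σ₁, …, σ_{p-1}`. -/
def Bsub (p : ℕ) : Subgroup BInf :=
  Subgroup.closure {x | ∃ i, 1 ≤ i ∧ i ≤ p - 1 ∧ x = sigma i}

/-- `δ_n = σ_{n-1} ⋯ σ₂ σ₁`. -/
def delta (n : ℕ) : BInf :=
  (((List.range (n - 1)).reverse).map (fun k => sigma (k + 1))).prod

/-- `τ_{p,q} = δ_{p+1} · ∂(δ_{p+1}) ⋯ ∂^{q-1}(δ_{p+1})`. -/
noncomputable def tau (p q : ℕ) : BInf :=
  ((List.range q).map (fun k => (fun x => shift x)^[k] (delta (p + 1)))).prod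

namespace BraidProofAux

/-- Generator with of-index `i` (this is `σ_{i+1}`). -/
def bg (i : ℕ) : BInf := PresentedGroup.of i

lemma rel_one : ∀ r ∈ braidRels, (PresentedGroup.mk braidRels r : BInf) = 1 := fun s hs =>
  (QuotientGroup.eq_one_iff _).mpr (Subgroup.subset_normalClosure hs)

lemma bg_comm {i j : ℕ} (h : i + 2 ≤ j) : Commute (bg i) (bg j) := by
  have h1 := rel_one _ (Or.inl ⟨i, j, h, rfl⟩)
  have : bg i * bg j * (bg i)⁻¹ * (bg j)⁻¹ = 1 := by
    simpa [bg, PresentedGroup.of, map_mul, map_inv, PresentedGroup.mk] using h1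
  have h2 := mul_inv_eq_one.mp this
  have h3 : bg i * bg j * (bg i)⁻¹ * bg i = bg j * bg i := by rw [h2]
  rwa [inv_mul_cancel_right] at h3

lemma bg_braid (i : ℕ) : bg i * bg (i+1) * bg i = bg (i+1) * bg i * bg (i+1) := by
  have h1 := rel_one _ (Or.inr ⟨i, rfl⟩)
  have : bg i * bg (i+1) * bg i * (bg (i+1) * bg i * bg (i+1))⁻¹ = 1 := by
    simpa [bg, PresentedGroup.of, map_mul, map_inv, PresentedGroup.mk] using h1
  exact mul_inv_eq_one.mp this

lemma shift_bg (i : ℕ) : shift (bg i) = bg (i + 1) :=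
  PresentedGroup.toGroup.of shift_aux

lemma sh_bg (k i : ℕ) : shift^[k] (bg i) = bg (i + k) := by
  induction k with
  | zero => rfl
  | succ k ih =>
      rw [Function.iterate_succ_apply', ih, shift_bg]
      ring_nf

lemma sh_one (k : ℕ) : shift^[k] (1 : BInf) = 1 := by
  induction k with
  | zero => rfl
  | succ k ih => rw [Function.iterate_succ_apply', ih, map_one]

lemma sh_mul (k : ℕ) (x y : BInf) : shift^[k] (x * y) = shift^[k] x * shift^[k] y := by
  induction k generalizing x y with
  | zero => rfl
  | succ k ih =>
      rw [Function.iterate_succ_apply', ih, map_mul,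
        Function.iterate_succ_apply', Function.iterate_succ_apply']

lemma sh_inv (k : ℕ) (x : BInf) : shift^[k] x⁻¹ = (shift^[k] x)⁻¹ := by
  induction k generalizing x with
  | zero => rfl
  | succ k ih =>
      rw [Function.iterate_succ_apply', ih, map_inv, Function.iterate_succ_apply']

/-- Subgroup generated by `bg i` for `a ≤ i < b`. -/
def Sp (a b : ℕ) : Subgroup BInf :=
  Subgroup.closure {g | ∃ i, a ≤ i ∧ i + 1 ≤ b ∧ g = bg i}

lemma bg_mem {a b i : ℕ} (h1 : a ≤ i) (h2 : i + 1 ≤ b) : bg i ∈ Sp a b :=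
  Subgroup.subset_closure ⟨i, h1, h2, rfl⟩

lemma Sp_mono {a b a' b' : ℕ} (ha : a' ≤ a) (hb : b ≤ b') : Sp a b ≤ Sp a' b' := by
  apply Subgroup.closure_mono
  rintro g ⟨i, h1, h2, rfl⟩
  exact ⟨i, le_trans ha h1, le_trans h2 hb, rfl⟩

lemma Sp_comm {a b c d : ℕ} (h : b + 1 ≤ c) {x y : BInf}
    (hx : x ∈ Sp a b) (hy : y ∈ Sp c d) : Commute x y := by
  induction hx using Subgroup.closure_induction with
  | mem g hg =>
      obtain ⟨i, hi1, hi2, rfl⟩ := hg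
      induction hy using Subgroup.closure_induction with
      | mem g' hg' =>
          obtain ⟨j, hj1, hj2, rfl⟩ := hg'
          exact bg_comm (by omega)
      | one => exact Commute.one_right _
      | mul _ _ _ _ h1 h2 => exact h1.mul_right h2
      | inv _ _ h1 => exact h1.inv_right
  | one => exact Commute.one_left _
  | mul _ _ _ _ h1 h2 => exact h1.mul_left h2
  | inv _ _ h1 => exact h1.inv_left

lemma shift_mem {a b : ℕ} {x : BInf} (hx : x ∈ Sp a b) : shift x ∈ Sp (a+1) (b+1) := by
  induction hx using Subgroup.closure_induction with
  | mem g hg =>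
      obtain ⟨i, h1, h2, rfl⟩ := hg
      rw [shift_bg]; exact bg_mem (by omega) (by omega)
  | one => rw [map_one]; exact one_mem _
  | mul x y _ _ h1 h2 => rw [map_mul]; exact mul_mem h1 h2
  | inv x _ h1 => rw [map_inv]; exact inv_mem h1

lemma sh_mem (k : ℕ) {a b : ℕ} {x : BInf} (hx : x ∈ Sp a b) :
    shift^[k] x ∈ Sp (a+k) (b+k) := by
  induction k with
  | zero => simpa using hx
  | succ k ih =>
      rw [Function.iterate_succ_apply']
      have := shift_mem ih
      convert this using 2 <;> omega

/-- Elements supported below commute with arbitrary shifted elements. -/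
lemma comm_shift_all {m k : ℕ} (h : m + 1 ≤ k) {x : BInf} (hx : x ∈ Sp 0 m)
    (z : BInf) : Commute x (shift^[k] z) := by
  obtain ⟨w, rfl⟩ := PresentedGroup.mk_surjective (rels := braidRels) z
  induction w with
  | C1 => rw [show ((PresentedGroup.mk braidRels 1 : BInf)) = 1 from map_one _, sh_one]
          exact Commute.one_right _
  | of i =>
      have : (PresentedGroup.mk braidRels (FreeGroup.of i) : BInf) = bg i := rfl
      rw [this, sh_bg]
      exact Sp_comm h hx (bg_mem (by omega) (le_refl _))
  | inv_of i h1 =>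
      rw [map_inv, sh_inv]
      exact h1.inv_right
  | mul u v h1 h2 =>
      rw [map_mul, sh_mul]
      exact h1.mul_right h2

end BraidProofAux

namespace BraidProofAux

lemma Sp_comm' {a b c d : ℕ} {x y : BInf} (hx : x ∈ Sp a b) (hy : y ∈ Sp c d)
    (h : b + 1 ≤ c) : Commute x y := Sp_comm h hx hy

lemma sigma_succ (k : ℕ) : sigma (k + 1) = bg k := rfl

lemma delta_one : delta 1 = 1 := by simp [delta]

lemma delta_two : delta 2 = bg 0 := by
  simp [delta, List.range_succ, sigma_succ]

lemma delta_succ (n : ℕ) : delta (n + 2) = bg n * delta (n + 1) := by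
  simp [delta, List.range_succ, sigma_succ]

lemma delta_mem (n : ℕ) : delta (n + 1) ∈ Sp 0 n := by
  induction n with
  | zero => rw [delta_one]; exact one_mem _
  | succ n ih =>
      rw [delta_succ]
      exact mul_mem (bg_mem (by omega) (by omega)) (Sp_mono (le_refl 0) (by omega) ih)

lemma delta_conj : ∀ m : ℕ, ∀ j : ℕ, j ≤ m →
    bg j * delta (m + 3) = delta (m + 3) * bg (j + 1) := by
  intro m
  induction m with
  | zero =>
      intro j hj
      interval_cases j
      have h3 : delta 3 = bg 1 * bg 0 := by
        rw [show (3:ℕ) = 1 + 2 from rfl, delta_succ, delta_two]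
      rw [h3, ← mul_assoc]
      simpa using bg_braid 0
  | succ m ih =>
      intro j hj
      have e1 : delta (m+1+3) = bg (m+2) * delta (m+3) := delta_succ (m+2)
      rcases Nat.lt_or_ge j (m+1) with h | h
      · have hc : Commute (bg j) (bg (m+2)) := bg_comm (i := j) (j := m+2) (by omega)
        rw [e1]
        calc bg j * (bg (m+2) * delta (m+3))
            = (bg j * bg (m+2)) * delta (m+3) := by rw [mul_assoc]
          _ = bg (m+2) * (bg j * delta (m+3)) := by rw [hc.eq, mul_assoc]
          _ = bg (m+2) * (delta (m+3) * bg (j+1)) := by rw [ih j (by omega)]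
          _ = bg (m+2) * delta (m+3) * bg (j+1) := by rw [mul_assoc]
      · have hj' : j = m + 1 := by omega
        subst hj'
        have e2 : delta (m+3) = bg (m+1) * delta (m+2) := delta_succ (m+1)
        have hc : Commute (delta (m+2)) (bg (m+2)) :=
          Sp_comm' (delta_mem (m+1)) (bg_mem (a := m+2) (b := m+3) (le_refl _) (le_refl _))
            (by omega)
        rw [e1, e2]
        show bg (m+1) * (bg (m+2) * (bg (m+1) * delta (m+2)))
            = bg (m+2) * (bg (m+1) * delta (m+2)) * bg (m+2)
        calc bg (m+1) * (bg (m+2) * (bg (m+1) * delta (m+2)))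
            = (bg (m+1) * bg (m+2) * bg (m+1)) * delta (m+2) := by group
          _ = (bg (m+2) * bg (m+1) * bg (m+2)) * delta (m+2) := by rw [bg_braid (m+1)]
          _ = bg (m+2) * bg (m+1) * (bg (m+2) * delta (m+2)) := by group
          _ = bg (m+2) * bg (m+1) * (delta (m+2) * bg (m+2)) := by rw [← hc.eq]
          _ = bg (m+2) * (bg (m+1) * delta (m+2)) * bg (m+2) := by group

-- tau basics
lemma tau_zero (p : ℕ) : tau p 0 = 1 := by simp [tau]

lemma tau_succ (p q : ℕ) : tau p (q + 1) = tau p q * shift^[q] (delta (p + 1)) := by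
  simp [tau, List.range_succ]

lemma tau_one (p : ℕ) : tau p 1 = delta (p + 1) := by
  rw [tau_succ, tau_zero, one_mul]; rfl

lemma tau_add (p q r : ℕ) : tau p (q + r) = tau p q * shift^[q] (tau p r) := by
  induction r with
  | zero => rw [tau_zero, sh_one, mul_one, Nat.add_zero]
  | succ r ih =>
      rw [show q + (r+1) = (q+r)+1 from rfl, tau_succ, ih, tau_succ, sh_mul,
        mul_assoc, ← Function.iterate_add_apply]

lemma tau_split_left (p q : ℕ) : tau p (q + 1) = delta (p + 1) * shift (tau p q) := by
  rw [show q + 1 = 1 + q from by omega, tau_add, tau_one]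
  rfl

lemma tau_mem (p q : ℕ) : tau p (q + 1) ∈ Sp 0 (p + q) := by
  induction q with
  | zero => rw [tau_one]; simpa using delta_mem p
  | succ q ih =>
      rw [tau_succ]
      refine mul_mem (Sp_mono (le_refl 0) (by omega) ih) ?_
      exact Sp_mono (by omega) (by omega) (sh_mem (q+1) (delta_mem p))

-- K1 at generator level
lemma k1gen (p : ℕ) : ∀ q : ℕ, ∀ j : ℕ, j + 2 ≤ p →
    bg j * tau p q = tau p q * bg (j + q) := by
  intro q
  induction q with
  | zero => intro j _; rw [tau_zero, one_mul, mul_one]; rfl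
  | succ q ih =>
      intro j hj
      have hd : bg j * delta (p+1) = delta (p+1) * bg (j+1) := by
        have hm : p + 1 = (p - 2) + 3 := by omega
        rw [hm]; exact delta_conj (p-2) j (by omega)
      rw [tau_succ]
      calc bg j * (tau p q * shift^[q] (delta (p+1)))
          = (bg j * tau p q) * shift^[q] (delta (p+1)) := by rw [mul_assoc]
        _ = tau p q * (bg (j+q) * shift^[q] (delta (p+1))) := by rw [ih j hj, mul_assoc]
        _ = tau p q * (shift^[q] (bg j) * shift^[q] (delta (p+1))) := by rw [sh_bg]
        _ = tau p q * shift^[q] (delta (p+1) * bg (j+1)) := by rw [← sh_mul, hd]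
        _ = tau p q * (shift^[q] (delta (p+1)) * bg (j+1+q)) := by rw [sh_mul, sh_bg]
        _ = (tau p q * shift^[q] (delta (p+1))) * bg (j+(q+1)) := by
              rw [← mul_assoc, show j+1+q = j+(q+1) from by omega]

-- the key base identity: σ_{p+1} τ_{p,2} = τ_{p,2} σ₁
lemma tau_two (p : ℕ) : tau p 2 = delta (p+1) * shift (delta (p+1)) := by
  rw [show (2:ℕ) = 1 + 1 from rfl, tau_succ, tau_one]
  rfl

lemma bp_base (p : ℕ) (hp : 1 ≤ p) : bg p * tau p 2 = tau p 2 * bg 0 := by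
  induction p, hp using Nat.le_induction with
  | base =>
      have h12 : tau 1 2 = bg 0 * bg 1 := by
        rw [tau_two, delta_two, shift_bg]
      rw [h12, ← mul_assoc]
      simpa using (bg_braid 0).symm
  | succ p hp ih =>
      rw [tau_two] at ih ⊢
      have e1 : delta (p+1+1) = bg p * delta (p+1) := delta_succ p
      have e2 : shift (delta (p+1+1)) = bg (p+1) * shift (delta (p+1)) := by
        rw [e1, map_mul, shift_bg]
      rw [e2, e1]
      set D := delta (p+1) with hD
      set E := shift (delta (p+1)) with hE
      have hcD : Commute D (bg (p+1)) :=
        Sp_comm' (delta_mem p) (bg_mem (a := p+1) (b := p+2) (le_refl _) (le_refl _)) (by omega)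
      calc bg (p+1) * (bg p * D * (bg (p+1) * E))
          = bg (p+1) * bg p * (D * bg (p+1)) * E := by group
        _ = bg (p+1) * bg p * (bg (p+1) * D) * E := by rw [hcD.eq]
        _ = (bg (p+1) * bg p * bg (p+1)) * (D * E) := by group
        _ = (bg p * bg (p+1) * bg p) * (D * E) := by rw [← bg_braid p]
        _ = bg p * bg (p+1) * (bg p * (D * E)) := by group
        _ = bg p * bg (p+1) * (D * E * bg 0) := by rw [ih]
        _ = bg p * (bg (p+1) * D) * E * bg 0 := by group
        _ = bg p * (D * bg (p+1)) * E * bg 0 := by rw [hcD.eq]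
        _ = bg p * D * (bg (p+1) * E) * bg 0 := by group

-- K4 at generator level
lemma k4gen (p : ℕ) (hp : 1 ≤ p) : ∀ q : ℕ, ∀ j : ℕ, j + 2 ≤ q →
    bg (p + j) * tau p q = tau p q * bg j := by
  intro q
  induction q with
  | zero => intro j hj; omega
  | succ q ih =>
      intro j hj
      rcases Nat.eq_zero_or_pos j with rfl | hj'
      · -- j = 0
        rcases Nat.lt_or_ge q 2 with hq | hq
        · have : q = 1 := by omega
          subst this
          simpa using bp_base p hp
        · have hc : Commute (bg 0) (shift^[q] (delta (p+1))) :=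
            Sp_comm' (bg_mem (a := 0) (b := 1) (le_refl _) (le_refl _))
              (sh_mem q (delta_mem p)) (by omega)
          rw [tau_succ]
          calc bg (p+0) * (tau p q * shift^[q] (delta (p+1)))
              = (bg (p+0) * tau p q) * shift^[q] (delta (p+1)) := by rw [mul_assoc]
            _ = (tau p q * bg 0) * shift^[q] (delta (p+1)) := by rw [ih 0 (by omega)]
            _ = tau p q * (bg 0 * shift^[q] (delta (p+1))) := by rw [mul_assoc]
            _ = tau p q * (shift^[q] (delta (p+1)) * bg 0) := by rw [hc.eq]
            _ = tau p q * shift^[q] (delta (p+1)) * bg 0 := by rw [mul_assoc]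
      · -- j ≥ 1
        obtain ⟨j', rfl⟩ : ∃ j', j = j' + 1 := ⟨j - 1, by omega⟩
        show bg (p+j'+1) * tau p (q+1) = tau p (q+1) * bg (j'+1)
        rw [tau_split_left]
        have hc : Commute (bg (p+j'+1)) (delta (p+1)) :=
          (Sp_comm' (delta_mem p) (bg_mem (a := p+1) (b := p+j'+2) (by omega) (by omega))
            (by omega)).symm
        calc bg (p+j'+1) * (delta (p+1) * shift (tau p q))
            = (bg (p+j'+1) * delta (p+1)) * shift (tau p q) := by rw [mul_assoc]
          _ = delta (p+1) * (bg (p+j'+1) * shift (tau p q)) := by rw [hc.eq, mul_assoc]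
          _ = delta (p+1) * (shift (bg (p+j')) * shift (tau p q)) := by rw [shift_bg]
          _ = delta (p+1) * shift (bg (p+j') * tau p q) := by rw [map_mul]
          _ = delta (p+1) * shift (tau p q * bg j') := by rw [ih j' (by omega)]
          _ = delta (p+1) * (shift (tau p q) * bg (j'+1)) := by rw [map_mul, shift_bg]
          _ = delta (p+1) * shift (tau p q) * bg (j'+1) := by rw [mul_assoc]

-- K1 for subgroup elements
lemma k1 (p q m : ℕ) (hmp : m + 1 ≤ p) {x : BInf} (hx : x ∈ Sp 0 m) :
    x * tau p q = tau p q * shift^[q] x := by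
  induction hx using Subgroup.closure_induction with
  | mem g hg =>
      obtain ⟨i, _, h2, rfl⟩ := hg
      rw [sh_bg, k1gen p q i (by omega)]
  | one => rw [sh_one, one_mul, mul_one]
  | mul x y _ _ h1 h2 =>
      rw [sh_mul]
      calc x * y * tau p q = x * (tau p q * shift^[q] y) := by rw [mul_assoc, h2]
        _ = (x * tau p q) * shift^[q] y := by rw [mul_assoc]
        _ = (tau p q * shift^[q] x) * shift^[q] y := by rw [h1]
        _ = tau p q * (shift^[q] x * shift^[q] y) := by rw [mul_assoc]
  | inv x _ h1 =>
      rw [sh_inv]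
      have key : x * (x⁻¹ * tau p q) * shift^[q] x
          = x * (tau p q * (shift^[q] x)⁻¹) * shift^[q] x := by
        calc x * (x⁻¹ * tau p q) * shift^[q] x = tau p q * shift^[q] x := by group
          _ = x * tau p q := h1.symm
          _ = x * (tau p q * (shift^[q] x)⁻¹) * shift^[q] x := by group
      exact mul_left_cancel (mul_right_cancel key)

-- K4 for subgroup elements
lemma k4 (p q m : ℕ) (hp : 1 ≤ p) (hmq : m + 1 ≤ q) {y : BInf} (hy : y ∈ Sp 0 m) :
    shift^[p] y * tau p q = tau p q * y := by
  induction hy using Subgroup.closure_induction with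
  | mem g hg =>
      obtain ⟨i, _, h2, rfl⟩ := hg
      rw [sh_bg, show i + p = p + i from by omega, k4gen p hp q i (by omega)]
  | one => rw [sh_one, one_mul, mul_one]
  | mul x y _ _ h1 h2 =>
      rw [sh_mul]
      calc shift^[p] x * shift^[p] y * tau p q
          = shift^[p] x * (tau p q * y) := by rw [mul_assoc, h2]
        _ = (shift^[p] x * tau p q) * y := by rw [mul_assoc]
        _ = (tau p q * x) * y := by rw [h1]
        _ = tau p q * (x * y) := by rw [mul_assoc]
  | inv x _ h1 =>
      rw [sh_inv]
      have key : shift^[p] x * ((shift^[p] x)⁻¹ * tau p q) * x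
          = shift^[p] x * (tau p q * x⁻¹) * x := by
        calc shift^[p] x * ((shift^[p] x)⁻¹ * tau p q) * x = tau p q * x := by group
          _ = shift^[p] x * tau p q := h1.symm
          _ = shift^[p] x * (tau p q * x⁻¹) * x := by group
      exact mul_left_cancel (mul_right_cancel key)

end BraidProofAux

namespace BraidProofAux

lemma Bsub_le (p : ℕ) : Bsub p ≤ Sp 0 (p - 1) := by
  apply (Subgroup.closure_le _).mpr
  rintro x ⟨i, h1, h2, rfl⟩
  have : sigma i = bg (i - 1) := rfl
  rw [this]
  exact bg_mem (by omega) (by omega)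

/-- Master lemma M1: `B_p` elements commuting with `a` conjugate through `W`. -/
lemma Mone (p : ℕ) (t a b x : BInf)
    (ht : x * t = t * shift^[p] x)
    (h1 : Commute x (shift^[p] a * shift^[p] t * shift^[p] b * a))
    (h2 : Commute (shift^[p] x) b) :
    x * (shift^[p] a * shift^[p] t * shift^[p] b * (a * t * b))
      = (shift^[p] a * shift^[p] t * shift^[p] b * (a * t * b)) * shift^[p] x := by
  calc x * (shift^[p] a * shift^[p] t * shift^[p] b * (a * t * b))
      = (x * (shift^[p] a * shift^[p] t * shift^[p] b * a)) * (t * b) := by group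
    _ = ((shift^[p] a * shift^[p] t * shift^[p] b * a) * x) * (t * b) := by rw [h1.eq]
    _ = (shift^[p] a * shift^[p] t * shift^[p] b * a) * (x * t) * b := by group
    _ = (shift^[p] a * shift^[p] t * shift^[p] b * a) * (t * shift^[p] x) * b := by rw [ht]
    _ = (shift^[p] a * shift^[p] t * shift^[p] b * a) * t * (shift^[p] x * b) := by group
    _ = (shift^[p] a * shift^[p] t * shift^[p] b * a) * t * (b * shift^[p] x) := by rw [h2.eq]
    _ = (shift^[p] a * shift^[p] t * shift^[p] b * (a * t * b)) * shift^[p] x := by group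

/-- Master lemma M2: `T` conjugates through `W` to `U`. -/
lemma Mtwo (p : ℕ) (T U t a b : BInf)
    (hTa : T * shift^[p] a = a * T)
    (hTa2 : T * a = shift^[p] a * T)
    (husb : shift^[p] t * shift^[p] b = shift^[p] (shift^[p] b) * shift^[p] t)
    (hc5 : Commute T (shift^[p] (shift^[p] b)))
    (hcau : Commute a (shift^[p] t))
    (hP3 : T * shift^[p] t * t = shift^[p] t * t * U)
    (hcbU : Commute b U)
    (hc3ab : Commute (shift^[p] a) (shift^[p] (shift^[p] b)))
    (hfin : Commute a (shift^[p] a * shift^[p] t * shift^[p] b)) :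
    T * (shift^[p] a * shift^[p] t * shift^[p] b * (a * t * b))
      = (shift^[p] a * shift^[p] t * shift^[p] b * (a * t * b)) * U := by
  calc T * (shift^[p] a * shift^[p] t * shift^[p] b * (a * t * b))
      = (T * shift^[p] a) * (shift^[p] t * shift^[p] b) * (a * t * b) := by group
    _ = (a * T) * (shift^[p] (shift^[p] b) * shift^[p] t) * (a * t * b) := by rw [hTa, husb]
    _ = a * (T * shift^[p] (shift^[p] b)) * (shift^[p] t * a) * (t * b) := by group
    _ = a * (shift^[p] (shift^[p] b) * T) * (a * shift^[p] t) * (t * b) := by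
          rw [hc5.eq, ← hcau.eq]
    _ = a * shift^[p] (shift^[p] b) * ((T * a) * (shift^[p] t * t)) * b := by group
    _ = a * shift^[p] (shift^[p] b) * ((shift^[p] a * T) * (shift^[p] t * t)) * b := by
          rw [hTa2]
    _ = a * shift^[p] (shift^[p] b) * shift^[p] a * (T * shift^[p] t * t) * b := by group
    _ = a * shift^[p] (shift^[p] b) * shift^[p] a * (shift^[p] t * t * U) * b := by rw [hP3]
    _ = a * shift^[p] (shift^[p] b) * shift^[p] a * shift^[p] t * t * (U * b) := by group
    _ = a * shift^[p] (shift^[p] b) * shift^[p] a * shift^[p] t * t * (b * U) := by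
          rw [← hcbU.eq]
    _ = a * (shift^[p] (shift^[p] b) * shift^[p] a) * (shift^[p] t * (t * b * U)) := by group
    _ = a * (shift^[p] a * shift^[p] (shift^[p] b)) * (shift^[p] t * (t * b * U)) := by
          rw [← hc3ab.eq]
    _ = a * shift^[p] a * (shift^[p] (shift^[p] b) * shift^[p] t) * (t * b * U) := by group
    _ = a * shift^[p] a * (shift^[p] t * shift^[p] b) * (t * b * U) := by rw [← husb]
    _ = (a * (shift^[p] a * shift^[p] t * shift^[p] b)) * (t * b) * U := by group
    _ = ((shift^[p] a * shift^[p] t * shift^[p] b) * a) * (t * b) * U := by rw [hfin.eq]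
    _ = (shift^[p] a * shift^[p] t * shift^[p] b * (a * t * b)) * U := by group

/-- The full conjugation identity `a₂ W₁ = W₁ ∂ᵖ(a₂)` for one ordering. -/
lemma oneSide (p : ℕ) (hp : 1 ≤ p) (e f : ℤ) (he : e = 1 ∨ e = -1) (hf : f = 1 ∨ f = -1)
    (a b c d : BInf) (ha : a ∈ Sp 0 (p-1)) (hb : b ∈ Sp 0 (p-1))
    (hcm : c ∈ Sp 0 (p-1)) (hdm : d ∈ Sp 0 (p-1))
    (hca : Commute c a) (hda : Commute d a) :
    (c * tau p p ^ f * d) * (shift^[p] (a * tau p p ^ e * b) * (a * tau p p ^ e * b))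
      = (shift^[p] (a * tau p p ^ e * b) * (a * tau p p ^ e * b))
        * shift^[p] (c * tau p p ^ f * d) := by
  have hTmem : tau p p ∈ Sp 0 (p + (p-1)) := by
    have := tau_mem p (p-1); rwa [show p - 1 + 1 = p from by omega] at this
  have K1p : ∀ x, x ∈ Sp 0 (p-1) → x * tau p p = tau p p * shift^[p] x :=
    fun x hx => k1 p p (p-1) (by omega) hx
  have K4p : ∀ x, x ∈ Sp 0 (p-1) → shift^[p] x * tau p p = tau p p * x :=
    fun x hx => k4 p p (p-1) hp (by omega) hx
  have K2 : tau p p * shift^[p] (tau p p) * tau p p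
      = shift^[p] (tau p p) * tau p p * shift^[p] (tau p p) := by
    have h := k4 p (p+p) (p+(p-1)) hp (by omega) hTmem
    rw [tau_add p p p] at h
    calc tau p p * shift^[p] (tau p p) * tau p p
        = shift^[p] (tau p p) * (tau p p * shift^[p] (tau p p)) := h.symm
      _ = shift^[p] (tau p p) * tau p p * shift^[p] (tau p p) := by group
  -- commutation helpers
  have cSp : ∀ {x y : BInf}, x ∈ Sp 0 (p-1) → y ∈ Sp 0 (p-1) →
      Commute x (shift^[p] y) := fun hx hy =>
    Sp_comm' hx (sh_mem p hy) (by omega)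
  have cSp2 : ∀ {x y : BInf}, x ∈ Sp 0 (p-1) → y ∈ Sp 0 (p-1) →
      Commute x (shift^[p] (shift^[p] y)) := fun hx hy =>
    Sp_comm' hx (sh_mem p (sh_mem p hy)) (by omega)
  have cSp12 : ∀ {x y : BInf}, x ∈ Sp 0 (p-1) → y ∈ Sp 0 (p-1) →
      Commute (shift^[p] x) (shift^[p] (shift^[p] y)) := fun hx hy =>
    Sp_comm' (sh_mem p hx) (sh_mem p (sh_mem p hy)) (by omega)
  have cxU : ∀ {x : BInf}, x ∈ Sp 0 (p-1) → Commute x (shift^[p] (tau p p)) :=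
    fun hx => Sp_comm' hx (sh_mem p hTmem) (by omega)
  have cT2 : ∀ {y : BInf}, y ∈ Sp 0 (p-1) →
      Commute (tau p p) (shift^[p] (shift^[p] y)) := fun hy =>
    Sp_comm' hTmem (sh_mem p (sh_mem p hy)) (by omega)
  -- the signed package
  have hsp_t : shift^[p] (tau p p ^ e) = shift^[p] (tau p p) ^ e := by
    rcases he with rfl | rfl
    · rw [zpow_one, zpow_one]
    · rw [show ((-1 : ℤ)) = -1 from rfl, zpow_neg_one, zpow_neg_one, sh_inv]
  have ht : ∀ x, x ∈ Sp 0 (p-1) → x * tau p p ^ e = tau p p ^ e * shift^[p] x := by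
    rcases he with rfl | rfl
    · intro x hx; rw [zpow_one]; exact K1p x hx
    · intro x hx
      rw [zpow_neg_one]
      have key : tau p p * (x * (tau p p)⁻¹) * tau p p
          = tau p p * ((tau p p)⁻¹ * shift^[p] x) * tau p p := by
        calc tau p p * (x * (tau p p)⁻¹) * tau p p = tau p p * x := by group
          _ = shift^[p] x * tau p p := (K4p x hx).symm
          _ = tau p p * ((tau p p)⁻¹ * shift^[p] x) * tau p p := by group
      exact mul_left_cancel (mul_right_cancel key)
  have ht2 : ∀ x, x ∈ Sp 0 (p-1) → shift^[p] x * tau p p ^ e = tau p p ^ e * x := by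
    rcases he with rfl | rfl
    · intro x hx; rw [zpow_one]; exact K4p x hx
    · intro x hx
      rw [zpow_neg_one]
      have key : tau p p * (shift^[p] x * (tau p p)⁻¹) * tau p p
          = tau p p * ((tau p p)⁻¹ * x) * tau p p := by
        calc tau p p * (shift^[p] x * (tau p p)⁻¹) * tau p p
            = tau p p * shift^[p] x := by group
          _ = x * tau p p := (K1p x hx).symm
          _ = tau p p * ((tau p p)⁻¹ * x) * tau p p := by group
      exact mul_left_cancel (mul_right_cancel key)
  have hP3 : tau p p * shift^[p] (tau p p ^ e) * tau p p ^ e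
      = shift^[p] (tau p p ^ e) * tau p p ^ e * shift^[p] (tau p p) := by
    rw [hsp_t]
    rcases he with rfl | rfl
    · rw [zpow_one, zpow_one]; exact K2
    · rw [zpow_neg_one, zpow_neg_one]
      have key : shift^[p] (tau p p) * (tau p p * (shift^[p] (tau p p))⁻¹ * (tau p p)⁻¹)
            * (tau p p * shift^[p] (tau p p))
          = shift^[p] (tau p p) * ((shift^[p] (tau p p))⁻¹ * (tau p p)⁻¹ * shift^[p] (tau p p))
            * (tau p p * shift^[p] (tau p p)) := by
        calc shift^[p] (tau p p) * (tau p p * (shift^[p] (tau p p))⁻¹ * (tau p p)⁻¹)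
              * (tau p p * shift^[p] (tau p p))
            = shift^[p] (tau p p) * tau p p := by group
          _ = (tau p p)⁻¹ * (tau p p * shift^[p] (tau p p) * tau p p) := by group
          _ = (tau p p)⁻¹ * (shift^[p] (tau p p) * tau p p * shift^[p] (tau p p)) := by rw [K2]
          _ = shift^[p] (tau p p) * ((shift^[p] (tau p p))⁻¹ * (tau p p)⁻¹ * shift^[p] (tau p p))
              * (tau p p * shift^[p] (tau p p)) := by group
      exact mul_left_cancel (mul_right_cancel key)
  have husb : shift^[p] (tau p p ^ e) * shift^[p] b
      = shift^[p] (shift^[p] b) * shift^[p] (tau p p ^ e) := by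
    have h0 := ht2 b hb
    have h1 := congrArg (fun w => shift^[p] w) h0
    simpa only [sh_mul] using h1.symm
  have hcau : Commute a (shift^[p] (tau p p ^ e)) := by
    rw [hsp_t]; exact (cxU ha).zpow_right e
  have hcbU : Commute b (shift^[p] (tau p p)) := cxU hb
  have hcat : Commute a (tau p p ^ e) → True := fun _ => trivial
  have hc5 : Commute (tau p p) (shift^[p] (shift^[p] b)) := cT2 hb
  have hc3ab : Commute (shift^[p] a) (shift^[p] (shift^[p] b)) := cSp12 ha hb
  have hfin : Commute a (shift^[p] a * shift^[p] (tau p p ^ e) * shift^[p] b) :=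
    ((cSp ha ha).mul_right hcau).mul_right (cSp ha hb)
  -- expand W
  have hWexp : shift^[p] (a * tau p p ^ e * b)
      = shift^[p] a * shift^[p] (tau p p ^ e) * shift^[p] b := by
    rw [sh_mul, sh_mul]
  have hfexp : shift^[p] (c * tau p p ^ f * d)
      = shift^[p] c * shift^[p] (tau p p ^ f) * shift^[p] d := by
    rw [sh_mul, sh_mul]
  rw [hWexp, hfexp]
  -- conjugation of the three pieces of c * T^f * d through W
  have M1c : c * (shift^[p] a * shift^[p] (tau p p ^ e) * shift^[p] b * (a * tau p p ^ e * b))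
      = (shift^[p] a * shift^[p] (tau p p ^ e) * shift^[p] b * (a * tau p p ^ e * b))
        * shift^[p] c :=
    Mone p _ a b c (ht c hcm)
      (((cSp hcm ha).mul_right (by rw [hsp_t]; exact (cxU hcm).zpow_right e)).mul_right
          (cSp hcm hb) |>.mul_right hca)
      ((cSp hb hcm).symm)
  have M1d : d * (shift^[p] a * shift^[p] (tau p p ^ e) * shift^[p] b * (a * tau p p ^ e * b))
      = (shift^[p] a * shift^[p] (tau p p ^ e) * shift^[p] b * (a * tau p p ^ e * b))
        * shift^[p] d :=
    Mone p _ a b d (ht d hdm)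
      (((cSp hdm ha).mul_right (by rw [hsp_t]; exact (cxU hdm).zpow_right e)).mul_right
          (cSp hdm hb) |>.mul_right hda)
      ((cSp hb hdm).symm)
  have M2 : tau p p
        * (shift^[p] a * shift^[p] (tau p p ^ e) * shift^[p] b * (a * tau p p ^ e * b))
      = (shift^[p] a * shift^[p] (tau p p ^ e) * shift^[p] b * (a * tau p p ^ e * b))
        * shift^[p] (tau p p) :=
    Mtwo p (tau p p) (shift^[p] (tau p p)) (tau p p ^ e) a b
      ((K1p a ha).symm) ((K4p a ha).symm) husb hc5 hcau hP3 hcbU hc3ab hfin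
  -- conjugation of tau^f through W
  have MTf : tau p p ^ f
        * (shift^[p] a * shift^[p] (tau p p ^ e) * shift^[p] b * (a * tau p p ^ e * b))
      = (shift^[p] a * shift^[p] (tau p p ^ e) * shift^[p] b * (a * tau p p ^ e * b))
        * shift^[p] (tau p p) ^ f := by
    rcases hf with rfl | rfl
    · rw [zpow_one, zpow_one]; exact M2
    · rw [zpow_neg_one, zpow_neg_one]
      set W := shift^[p] a * shift^[p] (tau p p ^ e) * shift^[p] b * (a * tau p p ^ e * b)
        with hW
      have key : tau p p * ((tau p p)⁻¹ * W) * shift^[p] (tau p p)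
          = tau p p * (W * (shift^[p] (tau p p))⁻¹) * shift^[p] (tau p p) := by
        calc tau p p * ((tau p p)⁻¹ * W) * shift^[p] (tau p p)
            = W * shift^[p] (tau p p) := by group
          _ = tau p p * W := M2.symm
          _ = tau p p * (W * (shift^[p] (tau p p))⁻¹) * shift^[p] (tau p p) := by group
      exact mul_left_cancel (mul_right_cancel key)
  -- assemble
  have hsp_f : shift^[p] (tau p p ^ f) = shift^[p] (tau p p) ^ f := by
    rcases hf with rfl | rfl
    · rw [zpow_one, zpow_one]
    · rw [zpow_neg_one, zpow_neg_one, sh_inv]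
  rw [hsp_f]
  set W := shift^[p] a * shift^[p] (tau p p ^ e) * shift^[p] b * (a * tau p p ^ e * b) with hW
  calc (c * tau p p ^ f * d) * W
      = c * (tau p p ^ f * (d * W)) := by group
    _ = c * (tau p p ^ f * (W * shift^[p] d)) := by rw [M1d]
    _ = c * (tau p p ^ f * W) * shift^[p] d := by group
    _ = c * (W * shift^[p] (tau p p) ^ f) * shift^[p] d := by rw [MTf]
    _ = (c * W) * (shift^[p] (tau p p) ^ f * shift^[p] d) := by group
    _ = (W * shift^[p] c) * (shift^[p] (tau p p) ^ f * shift^[p] d) := by rw [M1c]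
    _ = W * (shift^[p] c * shift^[p] (tau p p) ^ f * shift^[p] d) := by group

end BraidProofAux

namespace BraidProofAux

/-- Distributivity from the conjugation identity. -/
lemma dist (p : ℕ) (A B : BInf)
    (hA : ∀ z : BInf, Commute A (shift^[p] (shift^[p] z)))
    (hB : ∀ z : BInf, Commute B (shift^[p] (shift^[p] z)))
    (hC : B * (shift^[p] A * A) = (shift^[p] A * A) * shift^[p] B)
    (x y z : BInf) :
    shift^[p] x⁻¹ * A * shift^[p] (shift^[p] y⁻¹ * B * shift^[p] z * y) * x
      = shift^[p] (shift^[p] x⁻¹ * A * shift^[p] y * x)⁻¹ * B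
        * shift^[p] (shift^[p] x⁻¹ * A * shift^[p] z * x)
        * (shift^[p] x⁻¹ * A * shift^[p] y * x) := by
  have hE : A * shift^[p] B = (shift^[p] A)⁻¹ * B * shift^[p] A * A := by
    have h5 : shift^[p] A * (A * shift^[p] B)
        = shift^[p] A * ((shift^[p] A)⁻¹ * B * shift^[p] A * A) := by
      calc shift^[p] A * (A * shift^[p] B)
          = (shift^[p] A * A) * shift^[p] B := by group
        _ = B * (shift^[p] A * A) := hC.symm
        _ = shift^[p] A * ((shift^[p] A)⁻¹ * B * shift^[p] A * A) := by group
    exact mul_left_cancel h5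
  have ey : shift^[p] (shift^[p] y⁻¹ * B * shift^[p] z * y)
      = (shift^[p] (shift^[p] y))⁻¹ * shift^[p] B * shift^[p] (shift^[p] z) * shift^[p] y := by
    rw [sh_mul, sh_mul, sh_mul, sh_inv, sh_inv]
  have ex : shift^[p] (shift^[p] x⁻¹ * A * shift^[p] y * x)⁻¹
      = ((shift^[p] (shift^[p] x))⁻¹ * shift^[p] A * shift^[p] (shift^[p] y) * shift^[p] x)⁻¹ := by
    rw [sh_inv, sh_mul, sh_mul, sh_mul, sh_inv, sh_inv]
  have ez : shift^[p] (shift^[p] x⁻¹ * A * shift^[p] z * x)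
      = (shift^[p] (shift^[p] x))⁻¹ * shift^[p] A * shift^[p] (shift^[p] z) * shift^[p] x := by
    rw [sh_mul, sh_mul, sh_mul, sh_inv, sh_inv]
  have cAY := hA y
  have cAZ := hA z
  have cBX := hB x
  rw [ey, ex, ez, sh_inv]
  set X := shift^[p] x with hX
  set X2 := shift^[p] X with hX2
  set Y := shift^[p] y with hY
  set Y2 := shift^[p] Y with hY2
  set Z2 := shift^[p] (shift^[p] z) with hZ2
  set SA := shift^[p] A with hSA
  set SB := shift^[p] B with hSB
  calc X⁻¹ * A * (Y2⁻¹ * SB * Z2 * Y) * x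
      = X⁻¹ * (A * Y2⁻¹) * (SB * Z2) * (Y * x) := by group
    _ = X⁻¹ * (Y2⁻¹ * A) * (SB * Z2) * (Y * x) := by rw [cAY.inv_right.eq]
    _ = X⁻¹ * Y2⁻¹ * (A * SB) * Z2 * Y * x := by group
    _ = X⁻¹ * Y2⁻¹ * (SA⁻¹ * B * SA * A) * Z2 * Y * x := by rw [hE]
    _ = X⁻¹ * Y2⁻¹ * SA⁻¹ * B * SA * (A * Z2) * Y * x := by group
    _ = X⁻¹ * Y2⁻¹ * SA⁻¹ * B * SA * (Z2 * A) * Y * x := by rw [cAZ.eq]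
    _ = X⁻¹ * Y2⁻¹ * SA⁻¹ * (B * X2) * X2⁻¹ * SA * Z2 * X * (X⁻¹ * A * Y * x) := by group
    _ = X⁻¹ * Y2⁻¹ * SA⁻¹ * (X2 * B) * X2⁻¹ * SA * Z2 * X * (X⁻¹ * A * Y * x) := by
          rw [cBX.eq]
    _ = (X2⁻¹ * SA * Y2 * X)⁻¹ * B * (X2⁻¹ * SA * Z2 * X) * (X⁻¹ * A * Y * x) := by group

end BraidProofAux


open BraidProofAux

/-- Generalized shifted conjugacy: if `a₁ = a₁' τ_{p,p}^{±1} a₁''` and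
`a₂ = a₂' τ_{p,p}^{±1} a₂''` with `a₁', a₁'', a₂', a₂'' ∈ B_p` and
`[a₁', a₂''] = [a₂', a₁''] = [a₁', a₂'] = 1`, then the operations
`x *ᵢ y = ∂^p(x⁻¹) aᵢ ∂^p(y) x` form a mutually left distributive system. -/
theorem gen_shifted_conjugacy_mutual_LD (p : ℕ) (hp : 1 ≤ p)
    (e₁ e₂ : ℤ) (he₁ : e₁ = 1 ∨ e₁ = -1) (he₂ : e₂ = 1 ∨ e₂ = -1)
    (a₁' a₁'' a₂' a₂'' : BInf)
    (h₁' : a₁' ∈ Bsub p) (h₁'' : a₁'' ∈ Bsub p)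
    (h₂' : a₂' ∈ Bsub p) (h₂'' : a₂'' ∈ Bsub p)
    (hc₁ : Commute a₁' a₂'') (hc₂ : Commute a₂' a₁'') (hc₃ : Commute a₁' a₂')
    (a₁ a₂ : BInf)
    (ha₁ : a₁ = a₁' * tau p p ^ e₁ * a₁'')
    (ha₂ : a₂ = a₂' * tau p p ^ e₂ * a₂'')
    (op₁ op₂ : BInf → BInf → BInf)
    (hop₁ : op₁ = fun x y => (fun w => shift w)^[p] x⁻¹ * a₁ * (fun w => shift w)^[p] y * x)
    (hop₂ : op₂ = fun x y => (fun w => shift w)^[p] x⁻¹ * a₂ * (fun w => shift w)^[p] y * x) :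
    (∀ x y z, op₁ x (op₂ y z) = op₂ (op₁ x y) (op₁ x z)) ∧
    (∀ x y z, op₂ x (op₁ y z) = op₁ (op₂ x y) (op₂ x z)) := by
  subst ha₁ ha₂ hop₁ hop₂
  have hm₁' : a₁' ∈ Sp 0 (p-1) := Bsub_le p h₁'
  have hm₁'' : a₁'' ∈ Sp 0 (p-1) := Bsub_le p h₁''
  have hm₂' : a₂' ∈ Sp 0 (p-1) := Bsub_le p h₂'
  have hm₂'' : a₂'' ∈ Sp 0 (p-1) := Bsub_le p h₂''
  have hTmem : tau p p ∈ Sp 0 (p + (p-1)) := by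
    have := tau_mem p (p-1); rwa [show p - 1 + 1 = p from by omega] at this
  have hA1mem : a₁' * tau p p ^ e₁ * a₁'' ∈ Sp 0 (p + (p-1)) :=
    mul_mem (mul_mem (Sp_mono (le_refl 0) (by omega) hm₁')
      (Subgroup.zpow_mem _ hTmem e₁)) (Sp_mono (le_refl 0) (by omega) hm₁'')
  have hA2mem : a₂' * tau p p ^ e₂ * a₂'' ∈ Sp 0 (p + (p-1)) :=
    mul_mem (mul_mem (Sp_mono (le_refl 0) (by omega) hm₂')
      (Subgroup.zpow_mem _ hTmem e₂)) (Sp_mono (le_refl 0) (by omega) hm₂'')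
  have hA1c : ∀ z : BInf, Commute (a₁' * tau p p ^ e₁ * a₁'')
      (shift^[p] (shift^[p] z)) := fun z => by
    have := comm_shift_all (m := p + (p-1)) (k := p + p) (by omega) hA1mem z
    rwa [Function.iterate_add_apply] at this
  have hA2c : ∀ z : BInf, Commute (a₂' * tau p p ^ e₂ * a₂'')
      (shift^[p] (shift^[p] z)) := fun z => by
    have := comm_shift_all (m := p + (p-1)) (k := p + p) (by omega) hA2mem z
    rwa [Function.iterate_add_apply] at this
  have C12 := oneSide p hp e₁ e₂ he₁ he₂ a₁' a₁'' a₂' a₂'' hm₁' hm₁'' hm₂' hm₂''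
    hc₃.symm hc₁.symm
  have C21 := oneSide p hp e₂ e₁ he₂ he₁ a₂' a₂'' a₁' a₁'' hm₂' hm₂'' hm₁' hm₁''
    hc₃ hc₂.symm
  have hfun : (fun w : BInf => shift w) = ⇑shift := rfl
  constructor
  · intro x y z
    simp only [hfun]
    exact dist p _ _ hA1c hA2c C12 x y z
  · intro x y z
    simp only [hfun]
    exact dist p _ _ hA2c hA1c C21 x y z
end
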